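/- Let T be a positive integer and Ṽ : {1,...,T} → ℝ a real-valued sequence (the no-reset membrane potentials). Define S̃[t] = 1 if Ṽ[t] > 1 and S̃[t] = 0 otherwise; define z[t] = Σ_{k=1}^{t} S̃[k]·(t − k + 1); and define S[t] = 1 if z[t] = 1 and S[t] = 0 otherwise. Then S[t] = 1 if and only if t is the smallest index in {1,...,T} with Ṽ[t] > 1; in particular S contains at most one spike, and S is identically zero exactly when Ṽ[t] ≤ 1 for all t. -/
import Mathlib


/-- End-to-end correctness of g∘φ∘f: thresholding the no-reset membrane
potentials Ṽ at 1, encoding with φ, and thresholding at z = 1 yields a spike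
train S with S[t] = 1 iff t is the first index with Ṽ[t] > 1; in particular S
has at most one spike, and S ≡ 0 exactly when Ṽ never exceeds the threshold. -/
theorem stmt_6 (T : ℕ) (hT : 0 < T) (V : ℕ → ℝ)
    (St : ℕ → ℕ) (hSt : ∀ t, St t = if 1 < V t then 1 else 0)
    (z : ℕ → ℕ) (hz : ∀ t, z t = ∑ k ∈ Finset.Icc 1 t, St k * (t - k + 1))
    (S : ℕ → ℕ) (hS : ∀ t, S t = if z t = 1 then 1 else 0) :
    (∀ t ∈ Finset.Icc 1 T,
      (S t = 1 ↔ 1 < V t ∧ ∀ k, 1 ≤ k → k < t → V k ≤ 1)) ∧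
    (∑ t ∈ Finset.Icc 1 T, S t) ≤ 1 ∧
    ((∀ t ∈ Finset.Icc 1 T, S t = 0) ↔ ∀ t ∈ Finset.Icc 1 T, V t ≤ 1) := by
  have key : ∀ t, 1 ≤ t → (z t = 1 ↔ 1 < V t ∧ ∀ k, 1 ≤ k → k < t → V k ≤ 1) := by
    intro t ht
    constructor
    · intro hzt
      have hsum : ∑ k ∈ Finset.Icc 1 t, St k * (t - k + 1) = 1 := by
        rw [← hz t]; exact hzt
      have hterm : ∀ k ∈ Finset.Icc 1 t, St k * (t - k + 1) ≤ 1 := by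
        intro k hk
        calc St k * (t - k + 1)
            ≤ ∑ j ∈ Finset.Icc 1 t, St j * (t - j + 1) :=
              Finset.single_le_sum (f := fun j => St j * (t - j + 1)) (fun i _ => Nat.zero_le _) hk
          _ = 1 := hsum
      have hVt : 1 < V t := by
        by_contra h
        have hSt0 : St t = 0 := by rw [hSt]; simp [h]
        have hzero : ∑ k ∈ Finset.Icc 1 t, St k * (t - k + 1) = 0 := by
          apply Finset.sum_eq_zero
          intro k hk
          rcases Finset.mem_Icc.mp hk with ⟨hk1, hk2⟩
          rcases Nat.lt_or_ge k t with hlt | hge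
          · have := hterm k hk
            have hSk : St k = 0 ∨ St k = 1 := by rw [hSt]; split <;> simp
            rcases hSk with h0 | h1
            · simp [h0]
            · rw [h1] at this; omega
          · have : k = t := le_antisymm hk2 hge
            simp [this, hSt0]
        omega
      refine ⟨hVt, ?_⟩
      intro k hk1 hkt
      by_contra h
      push_neg at h
      have hStk : St k = 1 := by rw [hSt]; simp [h]
      have hm : k ∈ Finset.Icc 1 t := Finset.mem_Icc.mpr ⟨hk1, le_of_lt hkt⟩
      have := hterm k hm
      rw [hStk] at this
      omega
    · rintro ⟨hVt, hprev⟩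
      rw [hz]
      rw [Finset.sum_eq_single_of_mem t (Finset.mem_Icc.mpr ⟨ht, le_refl t⟩)]
      · have : St t = 1 := by rw [hSt]; simp [hVt]
        simp [this]
      · intro k hk hne
        rcases Finset.mem_Icc.mp hk with ⟨hk1, hk2⟩
        have hkt : k < t := lt_of_le_of_ne hk2 hne
        have : St k = 0 := by
          rw [hSt]
          have := hprev k hk1 hkt
          simp [not_lt.mpr this]
        simp [this]
  have keyS : ∀ t, 1 ≤ t → (S t = 1 ↔ 1 < V t ∧ ∀ k, 1 ≤ k → k < t → V k ≤ 1) := by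
    intro t ht
    rw [hS]
    constructor
    · intro h
      have hz1 : z t = 1 := by by_contra hc; simp [hc] at h
      exact (key t ht).mp hz1
    · intro h
      have := (key t ht).mpr h
      simp [this]
  refine ⟨fun t htm => keyS t (Finset.mem_Icc.mp htm).1, ?_, ?_⟩
  · have hcard : ∑ t ∈ Finset.Icc 1 T, S t
        = ((Finset.Icc 1 T).filter (fun t => z t = 1)).card := by
      rw [Finset.card_filter]
      exact Finset.sum_congr rfl (fun t _ => by rw [hS])
    rw [hcard]
    apply Finset.card_le_one.mpr
    intro a ha b hb
    rcases Finset.mem_filter.mp ha with ⟨hamem, haz⟩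
    rcases Finset.mem_filter.mp hb with ⟨hbmem, hbz⟩
    rcases Finset.mem_Icc.mp hamem with ⟨ha1, _⟩
    rcases Finset.mem_Icc.mp hbmem with ⟨hb1, _⟩
    rcases (key a ha1).mp haz with ⟨hVa, hpa⟩
    rcases (key b hb1).mp hbz with ⟨hVb, hpb⟩
    by_contra hne
    rcases Nat.lt_or_ge a b with h | h
    · exact absurd hVa (not_lt.mpr (hpb a ha1 h))
    · have : b < a := lt_of_le_of_ne h (fun e => hne e.symm)
      exact absurd hVb (not_lt.mpr (hpa b hb1 this))
  · constructor
    · intro hall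
      by_contra hc
      push_neg at hc
      rcases hc with ⟨t0, ht0m, hVt0⟩
      rcases Finset.mem_Icc.mp ht0m with ⟨ht01, ht0T⟩
      have hex : ∃ n, 1 ≤ n ∧ n ≤ T ∧ 1 < V n := ⟨t0, ht01, ht0T, hVt0⟩
      classical
      let m := Nat.find hex
      obtain ⟨hm1, hmT, hVm⟩ := Nat.find_spec hex
      have hmin : ∀ k, 1 ≤ k → k < m → V k ≤ 1 := by
        intro k hk1 hkm
        by_contra h
        push_neg at h
        exact absurd (Nat.find_le ⟨hk1, le_trans (le_of_lt (lt_of_lt_of_le hkm hmT)) (le_refl T), h⟩)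
          (not_le.mpr hkm)
      have : S m = 1 := (keyS m hm1).mpr ⟨hVm, hmin⟩
      have h0 := hall m (Finset.mem_Icc.mpr ⟨hm1, hmT⟩)
      omega
    · intro hall t htm
      rcases Finset.mem_Icc.mp htm with ⟨ht1, _⟩
      have hS01 : S t = 0 ∨ S t = 1 := by rw [hS]; split <;> simp
      rcases hS01 with h | h
      · exact h
      · rcases (keyS t ht1).mp h with ⟨hVt, _⟩
        exact absurd hVt (not_lt.mpr (hall t htm))
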